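/- arXiv:1403.2942 — 3 statements merged into one kernel-verified Lean document; each statement's English description precedes it below -/
import Mathlib

section
/- For any ring R and any positive integer m, the natural map W⃖(R/(p^{m+1})) → W⃖(R/(p^m)) induced by functoriality is bijective, where W⃖(S) denotes the inverse limit of the finite p-typical Witt vector rings W_{p^n}(S) along the Frobenius transition maps. -/
open WittVector

/-- Frobenius `W_{pⁿ⁺¹}(R) → W_{pⁿ}(R)` on finite-length `p`-typical Witt vectors. -/
noncomputable def truncatedFrobenius (p : ℕ) [Fact p.Prime] (R : Type*) [CommRing R] (n : ℕ)
    (x : TruncatedWittVector p (n + 2) R) : TruncatedWittVector p (n + 1) R :=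
  WittVector.truncate (n + 1) (WittVector.frobenius x.out)

/-- `W⃖(R)`: the inverse limit of the `W_{pⁿ}(R)` along Frobenius. -/
def Warrow (p : ℕ) [Fact p.Prime] (R : Type*) [CommRing R] : Type _ :=
  { x : ∀ n : ℕ, TruncatedWittVector p (n + 1) R //
      ∀ n : ℕ, truncatedFrobenius p R n (x (n + 1)) = x n }

/-- The componentwise map on truncated Witt vectors induced by a ring map. -/
def truncatedMap {R S : Type*} [CommRing R] [CommRing S] (p n : ℕ) (f : R →+* S)
    (x : TruncatedWittVector p n R) : TruncatedWittVector p n S :=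
  TruncatedWittVector.mk p fun i => f (x.coeff i)

open MvPolynomial

/-- `aeval` of `frobeniusPolyAux p n` only depends on the variables `0, ..., n+1`. -/
private lemma aux_aeval_congr (p : ℕ) [Fact p.Prime] {A : Type*} [CommRing A] :
    ∀ (n : ℕ) (c c' : ℕ → A), (∀ i ≤ n + 1, c i = c' i) →
      aeval c (frobeniusPolyAux p n) = aeval c' (frobeniusPolyAux p n) := by
  intro n
  induction n using Nat.strong_induction_on with
  | _ n ih =>
    intro c c' h
    rw [frobeniusPolyAux_eq]
    simp only [map_sub, map_sum, map_mul, map_pow, aeval_X, aeval_C]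
    rw [h (n + 1) le_rfl]
    congr 1
    refine Finset.sum_congr rfl fun i hi => Finset.sum_congr rfl fun j _ => ?_
    have hi' := Finset.mem_range.mp hi
    rw [h i (by omega), ih i hi' c c' fun k hk => h k (by omega)]

private lemma frob_coeff_congr {p : ℕ} [Fact p.Prime] {A : Type*} [CommRing A]
    (w w' : WittVector p A) (i : ℕ) (h : ∀ k ≤ i + 1, w.coeff k = w'.coeff k) :
    (WittVector.frobenius w).coeff i = (WittVector.frobenius w').coeff i := by
  rw [WittVector.coeff_frobenius, WittVector.coeff_frobenius, frobeniusPoly]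
  simp only [map_add, map_mul, map_pow, aeval_X, aeval_C]
  rw [h i (by omega), aux_aeval_congr p i _ _ h]

private lemma constantCoeff_frobeniusPolyAux (p : ℕ) [hp : Fact p.Prime] (n : ℕ) :
    constantCoeff (frobeniusPolyAux p n) = 0 := by
  have h0 : aeval (0 : WittVector p ℤ).coeff (frobeniusPoly p n) = 0 := by
    rw [← WittVector.coeff_frobenius, map_zero, WittVector.zero_coeff]
  rw [aeval_eq_constantCoeff_of_vars (fun i _ => WittVector.zero_coeff p ℤ i)] at h0
  have h1 : constantCoeff (frobeniusPoly p n) = 0 := by simpa using h0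
  rw [frobeniusPoly] at h1
  simp only [map_add, map_pow, map_mul, constantCoeff_X, constantCoeff_C] at h1
  rw [zero_pow hp.out.ne_zero, zero_add] at h1
  rcases mul_eq_zero.mp h1 with h | h
  · exact absurd h (by exact_mod_cast hp.out.ne_zero)
  · exact h

private lemma aeval_sub_constantCoeff_mem {A : Type*} [CommRing A] (I : Ideal A)
    (c : ℕ → A) (h : ∀ i, c i ∈ I) (q : MvPolynomial ℕ ℤ) :
    aeval c q - algebraMap ℤ A (constantCoeff q) ∈ I := by
  induction q using MvPolynomial.induction_on with
  | C a => simp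
  | add q r hq hr =>
      have h2 : aeval c (q + r) - algebraMap ℤ A (constantCoeff (q + r)) =
          (aeval c q - algebraMap ℤ A (constantCoeff q)) +
            (aeval c r - algebraMap ℤ A (constantCoeff r)) := by
        simp only [map_add]; ring
      rw [h2]; exact I.add_mem hq hr
  | mul_X q i hq =>
      have h2 : aeval c (q * X i) - algebraMap ℤ A (constantCoeff (q * X i)) =
          aeval c q * c i := by
        simp only [map_mul, aeval_X, constantCoeff_X, mul_zero, map_zero, sub_zero]
      rw [h2]; exact I.mul_mem_left _ (h i)

private lemma frobenius_eq_zero {p : ℕ} [hp : Fact p.Prime] {A B : Type*} [CommRing A]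
    [CommRing B] (f : A →+* B) (hmul : ∀ a b : A, f a = 0 → f b = 0 → a * b = 0)
    (hpk : ∀ a : A, f a = 0 → (p : A) * a = 0)
    (w : WittVector p A) (hw : ∀ i, f (w.coeff i) = 0) :
    WittVector.frobenius w = 0 := by
  have hp2 := hp.out.two_le
  ext n
  rw [WittVector.coeff_frobenius, WittVector.zero_coeff, frobeniusPoly]
  simp only [map_add, map_mul, map_pow, aeval_X, aeval_C]
  have e1 : w.coeff n ^ p = 0 := by
    have hsplit : w.coeff n ^ p = w.coeff n ^ (p - 1) * w.coeff n := by
      rw [← pow_succ]; congr 1; omega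
    rw [hsplit]
    exact hmul _ _ (by rw [map_pow, hw n, zero_pow (by omega : p - 1 ≠ 0)]) (hw n)
  have e2 : f (aeval w.coeff (frobeniusPolyAux p n)) = 0 := by
    have hmem := aeval_sub_constantCoeff_mem (RingHom.ker f) w.coeff
      (fun i => RingHom.mem_ker.mpr (hw i)) (frobeniusPolyAux p n)
    rw [constantCoeff_frobeniusPolyAux, map_zero, sub_zero] at hmem
    exact RingHom.mem_ker.mp hmem
  have e3 : (algebraMap ℤ A) ((p : ℕ) : ℤ) = (p : A) := by simp
  rw [e1, e3, hpk _ e2, zero_add]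

private lemma truncate_out' {p : ℕ} [Fact p.Prime] {A : Type*} [CommRing A] {k : ℕ}
    (z : TruncatedWittVector p k A) : WittVector.truncate k z.out = z := by
  apply TruncatedWittVector.ext; intro i
  rw [WittVector.coeff_truncate, TruncatedWittVector.coeff_out]

private lemma truncatedMap_truncate {p : ℕ} [Fact p.Prime] {A B : Type*} [CommRing A]
    [CommRing B] (f : A →+* B) {k : ℕ} (w : WittVector p A) :
    truncatedMap p k f (WittVector.truncate k w) =
      WittVector.truncate k (WittVector.map f w) := by
  apply TruncatedWittVector.ext; intro i
  simp only [truncatedMap, TruncatedWittVector.coeff_mk, WittVector.coeff_truncate,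
    WittVector.map_coeff]

private lemma truncatedFrobenius_eq {p : ℕ} [Fact p.Prime] {A : Type*} [CommRing A] (n : ℕ)
    (z : TruncatedWittVector p (n + 2) A) (w : WittVector p A)
    (hw : WittVector.truncate (n + 2) w = z) :
    truncatedFrobenius p A n z = WittVector.truncate (n + 1) (WittVector.frobenius w) := by
  unfold truncatedFrobenius
  apply TruncatedWittVector.ext; intro i
  rw [WittVector.coeff_truncate, WittVector.coeff_truncate]
  apply frob_coeff_congr
  intro k hk
  have hk2 : k < n + 2 := by have := i.isLt; omega
  have h1 : z.out.coeff k = z.coeff ⟨k, hk2⟩ := TruncatedWittVector.coeff_out z ⟨k, hk2⟩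
  have h2 : w.coeff k = z.coeff ⟨k, hk2⟩ := by
    rw [← hw, WittVector.coeff_truncate]
  rw [h1, h2]

private lemma truncatedFrobenius_congr {p : ℕ} [Fact p.Prime] {A B : Type u} [CommRing A]
    [CommRing B] (f : A →+* B) (hmul : ∀ a b : A, f a = 0 → f b = 0 → a * b = 0)
    (hpk : ∀ a : A, f a = 0 → (p : A) * a = 0) (n : ℕ)
    (z z' : TruncatedWittVector p (n + 2) A)
    (h : truncatedMap p (n + 2) f z = truncatedMap p (n + 2) f z') :
    truncatedFrobenius p A n z = truncatedFrobenius p A n z' := by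
  set d : WittVector p A := z.out - z'.out with hd
  have hker : ∀ i < n + 2, f (d.coeff i) = 0 := by
    intro i hi
    have h0 : WittVector.truncate (n + 2) (WittVector.map f d) = 0 := by
      rw [hd, map_sub (WittVector.map f), map_sub (WittVector.truncate (n + 2)),
        ← truncatedMap_truncate, ← truncatedMap_truncate, truncate_out', truncate_out', h,
        sub_self]
    have := (WittVector.mem_ker_truncate (n + 2) (WittVector.map f d)).mp
      (RingHom.mem_ker.mpr h0) i hi
    rwa [WittVector.map_coeff] at this
  set w : WittVector p A := WittVector.mk p (fun i => if i < n + 2 then d.coeff i else 0)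
    with hwdef
  have hwcoeff : ∀ i, f (w.coeff i) = 0 := by
    intro i
    rw [hwdef, WittVector.coeff_mk]
    split_ifs with hi
    · exact hker i hi
    · exact map_zero f
  have hfw : WittVector.frobenius w = 0 := frobenius_eq_zero f hmul hpk w hwcoeff
  have hsub : truncatedFrobenius p A n z - truncatedFrobenius p A n z' =
      WittVector.truncate (n + 1) (WittVector.frobenius d) := by
    unfold truncatedFrobenius
    rw [hd, map_sub WittVector.frobenius, map_sub (WittVector.truncate (n + 1))]
  have hdw : WittVector.truncate (n + 1) (WittVector.frobenius d) = 0 := by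
    have heq : WittVector.truncate (n + 1) (WittVector.frobenius d) =
        WittVector.truncate (n + 1) (WittVector.frobenius w) := by
      apply TruncatedWittVector.ext; intro i
      rw [WittVector.coeff_truncate, WittVector.coeff_truncate]
      apply frob_coeff_congr
      intro k hk
      have hk2 : k < n + 2 := by have := i.isLt; omega
      rw [hwdef, WittVector.coeff_mk, if_pos hk2]
    rw [heq, hfw, map_zero]
  exact sub_eq_zero.mp (hsub.trans hdw)

private lemma truncatedMap_truncatedFrobenius {p : ℕ} [Fact p.Prime] {A B : Type u}
    [CommRing A] [CommRing B] (f : A →+* B) (n : ℕ) (z : TruncatedWittVector p (n + 2) A) :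
    truncatedMap p (n + 1) f (truncatedFrobenius p A n z) =
      truncatedFrobenius p B n (truncatedMap p (n + 2) f z) := by
  rw [truncatedFrobenius_eq n (truncatedMap p (n + 2) f z) (WittVector.map f z.out)
    (by rw [← truncatedMap_truncate, truncate_out'])]
  unfold truncatedFrobenius
  rw [truncatedMap_truncate, (frobenius_isPoly p).map f z.out]

/-- For any ring `R` and any positive integer `m`, the functorial map
`W⃖(R/(p^{m+1})) → W⃖(R/(p^m))` is bijective. -/
theorem stmt10 (p : ℕ) [Fact p.Prime] (R : Type*) [CommRing R] (m : ℕ) (hm : 1 ≤ m) :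
    ∀ y : Warrow p (R ⧸ Ideal.span {(p : R) ^ m}),
      ∃! x : Warrow p (R ⧸ Ideal.span {(p : R) ^ (m + 1)}),
        ∀ n : ℕ,
          truncatedMap p (n + 1)
            (Ideal.Quotient.factor (S := Ideal.span {(p : R) ^ (m + 1)})
              (T := Ideal.span {(p : R) ^ m})
              (Ideal.span_singleton_le_span_singleton.mpr (pow_dvd_pow _ (by omega))))
            (x.1 n) = y.1 n := by
  intro y
  set f : (R ⧸ Ideal.span {(p : R) ^ (m + 1)}) →+* R ⧸ Ideal.span {(p : R) ^ m} :=
    Ideal.Quotient.factor (S := Ideal.span {(p : R) ^ (m + 1)}) (T := Ideal.span {(p : R) ^ m})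
      (Ideal.span_singleton_le_span_singleton.mpr (pow_dvd_pow _ (by omega))) with hf
  have hfactor : ∀ r : R,
      f (Ideal.Quotient.mk (Ideal.span {(p : R) ^ (m + 1)}) r) =
        Ideal.Quotient.mk (Ideal.span {(p : R) ^ m}) r := fun r =>
    Ideal.Quotient.factor_mk _ r
  have hker : ∀ a, f a = 0 → ∃ r : R,
      a = Ideal.Quotient.mk (Ideal.span {(p : R) ^ (m + 1)}) r ∧ (p : R) ^ m ∣ r := by
    intro a ha
    obtain ⟨r, rfl⟩ := Ideal.Quotient.mk_surjective a
    refine ⟨r, rfl, ?_⟩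
    rw [hfactor, Ideal.Quotient.eq_zero_iff_mem, Ideal.mem_span_singleton] at ha
    exact ha
  have hmul : ∀ a b, f a = 0 → f b = 0 → a * b = 0 := by
    intro a b ha hb
    obtain ⟨r, rfl, r', rfl⟩ := hker a ha
    obtain ⟨s, rfl, s', rfl⟩ := hker b hb
    rw [← map_mul, Ideal.Quotient.eq_zero_iff_mem, Ideal.mem_span_singleton]
    have hdvd : ((p : R) ^ (m + 1)) ∣ (p : R) ^ m * (p : R) ^ m := by
      rw [← pow_add]; exact pow_dvd_pow _ (by omega)
    have h2 : (p : R) ^ m * r' * ((p : R) ^ m * s') = ((p : R) ^ m * (p : R) ^ m) * (r' * s') :=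
      by ring
    rw [h2]; exact hdvd.mul_right _
  have hpk : ∀ a, f a = 0 → (p : (R ⧸ Ideal.span {(p : R) ^ (m + 1)})) * a = 0 := by
    intro a ha
    obtain ⟨r, rfl, r', rfl⟩ := hker a ha
    rw [← map_natCast (Ideal.Quotient.mk (Ideal.span {(p : R) ^ (m + 1)})) p, ← map_mul,
      Ideal.Quotient.eq_zero_iff_mem, Ideal.mem_span_singleton]
    exact ⟨r', by ring⟩
  have hsurj : Function.Surjective f := by
    intro b
    obtain ⟨r, rfl⟩ := Ideal.Quotient.mk_surjective b
    exact ⟨Ideal.Quotient.mk _ r, hfactor r⟩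
  have hLsurj : ∀ (k : ℕ) (u : TruncatedWittVector p k (R ⧸ Ideal.span {(p : R) ^ m})),
      ∃ z, truncatedMap p k f z = u := by
    intro k u
    refine ⟨TruncatedWittVector.mk p fun i => Function.surjInv hsurj (u.coeff i), ?_⟩
    apply TruncatedWittVector.ext; intro i
    simp only [truncatedMap, TruncatedWittVector.coeff_mk]
    exact Function.surjInv_eq hsurj _
  choose L hL using hLsurj
  set x : ∀ n : ℕ, TruncatedWittVector p (n + 1) (R ⧸ Ideal.span {(p : R) ^ (m + 1)}) :=
    fun n => truncatedFrobenius p _ n (L (n + 2) (y.1 (n + 1))) with hx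
  have hxmap : ∀ n, truncatedMap p (n + 1) f (x n) = y.1 n := by
    intro n
    rw [hx, truncatedMap_truncatedFrobenius, hL, y.2 n]
  have hxcomp : ∀ n, truncatedFrobenius p _ n (x (n + 1)) = x n := by
    intro n
    exact truncatedFrobenius_congr f hmul hpk n _ _
      ((hxmap (n + 1)).trans (hL (n + 2) (y.1 (n + 1))).symm)
  refine ⟨⟨x, hxcomp⟩, fun n => hxmap n, ?_⟩
  intro x' hx'
  apply Subtype.ext
  funext n
  show x'.1 n = x n
  calc x'.1 n = truncatedFrobenius p _ n (x'.1 (n + 1)) := (x'.2 n).symm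
    _ = truncatedFrobenius p _ n (x (n + 1)) :=
        truncatedFrobenius_congr f hmul hpk n _ _
          ((hx' (n + 1)).trans (hxmap (n + 1)).symm)
    _ = x n := hxcomp n
end

section
/- Let R be a p-adically complete (and separated) ring. Then the natural map W⃖(R) → W⃖(R/(p)) is an isomorphism, where W⃖(S) denotes the inverse limit of the rings W_{p^n}(S) under the Frobenius transition maps. -/
open WittVector

namespace Stmt11Aux

open MvPolynomial

variable {p : ℕ} [hp : Fact p.Prime] {R : Type*} [CommRing R]

/-- Frobenius on (full) Witt vectors, as a bare function (convenient for `Function.iterate`). -/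
noncomputable def frob {p : ℕ} [Fact p.Prime] {S : Type*} [CommRing S]
    (w : WittVector p S) : WittVector p S :=
  WittVector.frobenius w

omit hp in
lemma aux_congr {S : Type*} [CommRing S] :
    ∀ (n : ℕ) (g g' : ℕ → S), (∀ j, j < n + 2 → g j = g' j) →
      aeval g (frobeniusPolyAux p n) = aeval g' (frobeniusPolyAux p n) := by
  intro n
  induction n using Nat.strong_induction_on with
  | _ n IH =>
    intro g g' h
    rw [frobeniusPolyAux_eq]
    simp only [map_sub, map_sum, map_mul, map_pow, aeval_X, aeval_C]
    rw [h (n+1) (by omega)]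
    congr 1
    refine Finset.sum_congr rfl fun i hi => ?_
    refine Finset.sum_congr rfl fun j hj => ?_
    rw [Finset.mem_range] at hi
    rw [h i (by omega), IH i hi g g' (fun j hj => h j (by omega))]

omit hp in
lemma aeval_frobPoly {S : Type*} [CommRing S] (g : ℕ → S) (n : ℕ) :
    aeval g (frobeniusPoly p n) = g n ^ p + p * aeval g (frobeniusPolyAux p n) := by
  rw [frobeniusPoly]
  simp only [map_add, map_mul, map_pow, aeval_X, aeval_C]
  norm_num

omit hp in
lemma mk_aeval (J : Ideal R) (g : ℕ → R) (φ : MvPolynomial ℕ ℤ) :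
    Ideal.Quotient.mk J (aeval g φ) = aeval (fun i => Ideal.Quotient.mk J (g i)) φ := by
  rw [map_aeval, aeval_def, ← coe_eval₂Hom]
  congr 1

lemma pow_p_sub_mem {k : ℕ} (hk : 1 ≤ k) {a b : R}
    (h : a - b ∈ Ideal.span {(p : R) ^ k}) :
    a ^ p - b ^ p ∈ Ideal.span {(p : R) ^ (k + 1)} := by
  obtain ⟨c, hc⟩ := Ideal.mem_span_singleton.mp h
  have ha : a = (p : R) ^ k * c + b := by linear_combination hc
  have hpp := hp.out
  rw [ha, add_pow_prime_eq hpp]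
  rw [Ideal.mem_span_singleton]
  have h1 : ((p : R) ^ k * c) ^ p = (p:R)^(k+1) * ((p:R)^(k*p - (k+1)) * c ^ p) := by
    rw [mul_pow, ← pow_mul, ← mul_assoc, ← pow_add]
    congr 2
    have : 2 ≤ p := hpp.two_le
    nlinarith [Nat.sub_add_cancel (show k+1 ≤ k*p by nlinarith)]
  have h2 : (p:R)^(k+1) ∣ (p:R) * ∑ j ∈ Finset.Ioo 0 p,
      ((p : R) ^ k * c) ^ j * b ^ (p - j) * ↑(p.choose j / p) := by
    rw [pow_succ']
    refine mul_dvd_mul_left _ ?_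
    refine Finset.dvd_sum fun j hj => ?_
    rw [Finset.mem_Ioo] at hj
    refine Dvd.dvd.mul_right (Dvd.dvd.mul_right ?_ _) _
    exact dvd_pow (dvd_mul_right _ _) (by omega) |>.trans (dvd_refl _)
  have h3 : (p:R)^(k+1) ∣ ((p : R) ^ k * c) ^ p := ⟨_, h1⟩
  have : ((p : R) ^ k * c) ^ p + b ^ p +
      (p:R) * (∑ j ∈ Finset.Ioo 0 p, ((p : R) ^ k * c) ^ j * b ^ (p - j) * ↑(p.choose j / p)) - b ^ p
      = ((p : R) ^ k * c) ^ p +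
      (p:R) * ∑ j ∈ Finset.Ioo 0 p, ((p : R) ^ k * c) ^ j * b ^ (p - j) * ↑(p.choose j / p) := by
    ring
  rw [add_sub_right_comm, add_sub_cancel_right]
  exact dvd_add h3 (((show (p:R)^(k+1) ∣ (p:R) * ((p:R)^k * c) from ⟨c, by ring⟩).mul_right b).mul_right _)

lemma frobenius_coeff_sub_mem {k m : ℕ} (hk : 1 ≤ k) {w w' : WittVector p R}
    (h : ∀ j, j < m → w.coeff j - w'.coeff j ∈ Ideal.span {(p : R) ^ k}) :
    ∀ j, j + 1 < m →
      (frob w).coeff j - (frob w').coeff j ∈ Ideal.span {(p : R) ^ (k + 1)} := by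
  intro j hj
  rw [frob, frob, coeff_frobenius, coeff_frobenius, aeval_frobPoly, aeval_frobPoly]
  have hA : aeval w.coeff (frobeniusPolyAux p j) - aeval w'.coeff (frobeniusPolyAux p j)
      ∈ Ideal.span {(p : R) ^ k} := by
    rw [← Ideal.Quotient.eq, mk_aeval, mk_aeval]
    exact aux_congr j _ _ fun i hi => Ideal.Quotient.eq.mpr (h i (by omega))
  have hpow := pow_p_sub_mem hk (h j (by omega))
  have heq : w.coeff j ^ p + ↑p * (aeval w.coeff) (frobeniusPolyAux p j) -
      (w'.coeff j ^ p + ↑p * (aeval w'.coeff) (frobeniusPolyAux p j)) =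
      (w.coeff j ^ p - w'.coeff j ^ p) +
      (p : R) * ((aeval w.coeff) (frobeniusPolyAux p j) -
        (aeval w'.coeff) (frobeniusPolyAux p j)) := by
    ring
  rw [heq]
  refine Ideal.add_mem _ hpow ?_
  obtain ⟨c, hc⟩ := Ideal.mem_span_singleton.mp hA
  rw [Ideal.mem_span_singleton, hc, pow_succ']
  exact mul_dvd_mul_left _ (Dvd.intro _ rfl)

omit hp in
lemma frobenius_coeff_eq' {S : Type*} [CommRing S] [Fact p.Prime] {m : ℕ} {w w' : WittVector p S}
    (h : ∀ j, j < m → w.coeff j = w'.coeff j) :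
    ∀ j, j + 1 < m → (frob w).coeff j = (frob w').coeff j := by
  intro j hj
  rw [frob, frob, coeff_frobenius, coeff_frobenius, aeval_frobPoly, aeval_frobPoly,
    h j (by omega), aux_congr j _ _ fun i hi => h i (by omega)]

omit hp in
lemma iter_frobenius_coeff_eq {S : Type*} [CommRing S] [Fact p.Prime] (k : ℕ) :
    ∀ {m : ℕ} {w w' : WittVector p S},
    (∀ j, j < m → w.coeff j = w'.coeff j) →
    ∀ j, j + k < m → (frob^[k] w).coeff j = (frob^[k] w').coeff j := by
  induction k with
  | zero => intro m w w' h j hj; simpa using h j (by omega)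
  | succ k IH =>
    intro m w w' h j hj
    rw [Function.iterate_succ_apply, Function.iterate_succ_apply]
    exact IH (m := m - 1) (fun i hi => frobenius_coeff_eq' h i (by omega)) j (by omega)

omit hp in
lemma smod_iff [Fact p.Prime] (m : ℕ) (a b : R) :
    (a ≡ b [SMOD ((Ideal.span {(p:R)}) ^ m • ⊤ : Ideal R)]) ↔
      a - b ∈ Ideal.span {(p : R) ^ m} := by
  rw [SModEq.sub_mem, smul_eq_mul, Ideal.mul_top, Ideal.span_singleton_pow]

omit hp in
lemma haus_eq [Fact p.Prime] [IsAdicComplete (Ideal.span {(p : R)}) R] {a b : R}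
    (h : ∀ k, a - b ∈ Ideal.span {(p : R) ^ (k + 1)}) : a = b := by
  rw [← sub_eq_zero]
  refine IsHausdorff.haus (inferInstance : IsHausdorff (Ideal.span {(p:R)}) R) (a - b) fun n => ?_
  rw [show (a - b) = (a - b) - 0 by ring] at *
  rw [SModEq.zero, smul_eq_mul, Ideal.mul_top, Ideal.span_singleton_pow]
  have := h n
  rw [Ideal.mem_span_singleton] at *
  exact (pow_dvd_pow _ (by omega)).trans this

omit hp in
lemma factT {S : Type*} [CommRing S] [Fact p.Prime] (x : Warrow p S) (n j : ℕ) (hj : j < n + 1) :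
    (frob ((x.1 (n+1)).out)).coeff j = ((x.1 n).out).coeff j := by
  have h := x.2 n
  have h2 := congrArg (fun t => TruncatedWittVector.coeff (⟨j, hj⟩ : Fin (n+1)) t) h
  simp only [truncatedFrobenius] at h2
  rw [WittVector.coeff_truncate] at h2
  rw [frob]
  exact h2.trans (TruncatedWittVector.coeff_out _ ⟨j, hj⟩).symm

omit hp in
lemma claimE {S : Type*} [CommRing S] [Fact p.Prime] (x : Warrow p S) :
    ∀ (k n j : ℕ), j < n + 1 →
      (frob^[k] ((x.1 (n+k)).out)).coeff j = ((x.1 n).out).coeff j := by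
  intro k
  induction k with
  | zero => intro n j hj; simp
  | succ k IH =>
    intro n j hj
    have hstep : ∀ i, i < n + k + 1 →
        (frob ((x.1 (n+k+1)).out)).coeff i = ((x.1 (n+k)).out).coeff i :=
      fun i hi => factT x (n+k) i hi
    show (frob^[k+1] ((x.1 (n+k+1)).out)).coeff j = ((x.1 n).out).coeff j
    rw [Function.iterate_succ_apply]
    calc (frob^[k] (frob ((x.1 (n+k+1)).out))).coeff j
        = (frob^[k] ((x.1 (n+k)).out)).coeff j :=
          iter_frobenius_coeff_eq k (m := n+k+1) hstep j (by omega)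
      _ = ((x.1 n).out).coeff j := IH n j hj

lemma warrow_uniq [IsAdicComplete (Ideal.span {(p : R)}) R] (x x' : Warrow p R)
    (h : ∀ n (i : Fin (n+1)),
      Ideal.Quotient.mk (Ideal.span {(p:R)}) ((x.1 n).coeff i) =
      Ideal.Quotient.mk (Ideal.span {(p:R)}) ((x'.1 n).coeff i)) :
    x = x' := by
  have h0 : ∀ n j, j < n + 1 →
      ((x.1 n).out).coeff j - ((x'.1 n).out).coeff j ∈ Ideal.span {(p:R)^(0+1)} := by
    intro n j hj
    rw [TruncatedWittVector.coeff_out (x.1 n) ⟨j, hj⟩,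
      TruncatedWittVector.coeff_out (x'.1 n) ⟨j, hj⟩]
    rw [zero_add, pow_one]
    exact Ideal.Quotient.eq.mp (h n ⟨j, hj⟩)
  have claimI : ∀ (k n j : ℕ), j + k < n + 1 →
      (frob^[k] ((x.1 n).out)).coeff j - (frob^[k] ((x'.1 n).out)).coeff j
        ∈ Ideal.span {(p:R)^(k+1)} := by
    intro k
    induction k with
    | zero => intro n j hj; simpa using h0 n j (by omega)
    | succ k IH =>
      intro n j hj
      rw [Function.iterate_succ_apply', Function.iterate_succ_apply']
      exact frobenius_coeff_sub_mem (k := k+1) (m := n + 1 - k) (by omega)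
        (fun j' hj' => IH n j' (by omega)) j (by omega)
  refine Subtype.ext (funext fun n => TruncatedWittVector.ext fun i => ?_)
  have key : ∀ k : ℕ, (x.1 n).coeff i - (x'.1 n).coeff i ∈ Ideal.span {(p:R)^(k+1)} := by
    intro k
    have e1 := claimE x k n i i.isLt
    have e2 := claimE x' k n i i.isLt
    have e3 := TruncatedWittVector.coeff_out (x.1 n) i
    have e4 := TruncatedWittVector.coeff_out (x'.1 n) i
    have := claimI k (n+k) i (by omega)
    rw [e1, e2, e3, e4] at this
    exact this
  exact haus_eq key

end Stmt11Aux

open Stmt11Aux MvPolynomial in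
/-- If `R` is `p`-adically complete (and separated), then the natural map
`W⃖(R) → W⃖(R/(p))` is an isomorphism. -/
theorem stmt11 (p : ℕ) [Fact p.Prime] (R : Type*) [CommRing R]
    [IsAdicComplete (Ideal.span {(p : R)}) R] :
    ∀ y : Warrow p (R ⧸ Ideal.span {(p : R)}),
      ∃! x : Warrow p R,
        ∀ n : ℕ,
          truncatedMap p (n + 1) (Ideal.Quotient.mk (Ideal.span {(p : R)})) (x.1 n) = y.1 n := by
  intro y
  let q : R ⧸ Ideal.span {(p : R)} → R := Function.surjInv Ideal.Quotient.mk_surjective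
  have hq : ∀ b, Ideal.Quotient.mk (Ideal.span {(p : R)}) (q b) = b :=
    fun b => Function.surjInv_eq _ b
  -- chosen coefficientwise lifts of the components of `y`
  let Zy : ℕ → WittVector p (R ⧸ Ideal.span {(p : R)}) := fun n => (y.1 n).out
  let Z : ℕ → WittVector p R := fun n => WittVector.mk p fun j => q ((Zy n).coeff j)
  have hZ : ∀ n j, Ideal.Quotient.mk (Ideal.span {(p : R)}) ((Z n).coeff j) = (Zy n).coeff j := by
    intro n j
    exact hq _
  -- reduction mod p commutes with frobenius, coefficientwise
  have hmkF : ∀ (w : WittVector p R) (v : WittVector p (R ⧸ Ideal.span {(p : R)})),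
      (∀ j, Ideal.Quotient.mk (Ideal.span {(p : R)}) (w.coeff j) = v.coeff j) →
      ∀ j, Ideal.Quotient.mk (Ideal.span {(p : R)}) ((frob w).coeff j) = (frob v).coeff j := by
    intro w v hw j
    rw [frob, frob, WittVector.coeff_frobenius, WittVector.coeff_frobenius]
    rw [mk_aeval]
    have hfun : (fun i => Ideal.Quotient.mk (Ideal.span {(p : R)}) (w.coeff i)) = v.coeff :=
      funext hw
    rw [hfun]
    rfl
  -- the base congruence between successive terms of the approximating sequences
  have step0 : ∀ n j, j < n + 1 →
      (frob (Z (n+1))).coeff j - (Z n).coeff j ∈ Ideal.span {(p:R)^1} := by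
    intro n j hj
    rw [pow_one]
    refine Ideal.Quotient.eq.mp ?_
    calc Ideal.Quotient.mk (Ideal.span {(p : R)}) ((frob (Z (n+1))).coeff j)
        = (frob (Zy (n+1))).coeff j := hmkF _ _ (hZ (n+1)) j
      _ = (Zy n).coeff j := factT y n j hj
      _ = Ideal.Quotient.mk (Ideal.span {(p : R)}) ((Z n).coeff j) := (hZ n j).symm
  have claimS : ∀ (k n j : ℕ), j < n + 1 →
      (frob^[k+1] (Z (n+(k+1)))).coeff j - (frob^[k] (Z (n+k))).coeff j
        ∈ Ideal.span {(p:R)^(k+1)} := by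
    intro k
    induction k with
    | zero =>
      intro n j hj
      simpa using step0 n j hj
    | succ k IH =>
      intro n j hj
      have IH' : ∀ j', j' < n + 2 →
          (frob^[k+1] (Z (n+1+(k+1)))).coeff j' - (frob^[k] (Z (n+1+k))).coeff j'
            ∈ Ideal.span {(p:R)^(k+1)} := by
        intro j' hj'
        have h := IH (n+1) j' hj'
        rwa [show n+1+(k+1) = n+1+(k+1) from rfl] at h
      have key := frobenius_coeff_sub_mem (k := k+1) (m := n+2) (by omega) IH' j (by omega)
      rw [← Function.iterate_succ_apply' frob (k+1) (Z (n+1+(k+1))),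
        ← Function.iterate_succ_apply' frob k (Z (n+1+k))] at key
      rwa [show n+1+(k+1) = n+(k+1+1) by omega, show n+1+k = n+(k+1) by omega] at key
  -- existence of coefficientwise limits
  have hL : ∀ n j, j < n + 1 → ∃ L : R, ∀ k,
      (frob^[k] (Z (n+k))).coeff j - L ∈ Ideal.span {(p:R)^k} := by
    intro n j hj
    set f : ℕ → R := fun k => (frob^[k] (Z (n+k))).coeff j with hf
    have hcau : ∀ {a b : ℕ}, a ≤ b → f a - f b ∈ Ideal.span {(p:R)^a} := by
      intro a b hab
      induction b, hab using Nat.le_induction with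
      | base => simpa using Ideal.zero_mem _
      | succ b hab IH =>
        have hstep := claimS b n j hj
        have hstep' : f (b+1) - f b ∈ Ideal.span {(p:R)^a} :=
          Ideal.span_singleton_le_span_singleton.mpr (pow_dvd_pow _ (by omega)) hstep
        have hsum := Ideal.add_mem _ IH (neg_mem hstep')
        have e : f a - f b + -(f (b+1) - f b) = f a - f (b+1) := by ring
        rwa [e] at hsum
    obtain ⟨L, hLspec⟩ := IsPrecomplete.prec
      (IsAdicComplete.toIsPrecomplete (I := Ideal.span {(p : R)}))
      (f := f) (fun {a b} hab => (smod_iff a (f a) (f b)).mpr (hcau hab))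
    exact ⟨L, fun k => (smod_iff k (f k) L).mp (hLspec k)⟩
  choose L hLs using hL
  -- the candidate element of `Warrow p R`
  let xc : ∀ n, TruncatedWittVector p (n+1) R :=
    fun n => TruncatedWittVector.mk p fun i => L n i i.isLt
  have hxc : ∀ n (i : Fin (n+1)), (xc n).coeff i = L n i i.isLt :=
    fun n i => TruncatedWittVector.coeff_mk _ _
  have hout : ∀ n j (hj : j < n + 1), ((xc n).out).coeff j = L n j hj := by
    intro n j hj
    have h := TruncatedWittVector.coeff_out (xc n) ⟨j, hj⟩
    rw [h, hxc]
  have htrans : ∀ n, truncatedFrobenius p R n (xc (n+1)) = xc n := by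
    intro n
    refine TruncatedWittVector.ext fun i => ?_
    rw [truncatedFrobenius, WittVector.coeff_truncate, hxc n i]
    refine haus_eq (p := p) fun m => ?_
    have h1 : ∀ j', j' < n + 2 →
        ((xc (n+1)).out).coeff j' - (frob^[m+1] (Z (n+1+(m+1)))).coeff j'
          ∈ Ideal.span {(p:R)^(m+1)} := by
      intro j' hj'
      rw [hout (n+1) j' hj']
      have hsp := hLs (n+1) j' hj' (m+1)
      have e : L (n+1) j' hj' - (frob^[m+1] (Z (n+1+(m+1)))).coeff j'
          = -((frob^[m+1] (Z (n+1+(m+1)))).coeff j' - L (n+1) j' hj') := by ring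
      rw [e]
      exact neg_mem hsp
    have h2 := frobenius_coeff_sub_mem (k := m+1) (m := n+2) (by omega) h1 i (by omega)
    have h3 : frob (frob^[m+1] (Z (n+1+(m+1)))) = frob^[m+1+1] (Z (n+(m+1+1))) := by
      rw [show n+(m+1+1) = n+1+(m+1) by omega]
      exact (Function.iterate_succ_apply' frob (m+1) (Z (n+1+(m+1)))).symm
    rw [h3] at h2
    have h4 := hLs n i i.isLt (m+1+1)
    have h5 := Ideal.add_mem _ h2 h4
    rw [sub_add_sub_cancel] at h5
    have hf : WittVector.frobenius ((xc (n+1)).out) = frob ((xc (n+1)).out) := rfl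
    rw [hf]
    exact Ideal.span_singleton_le_span_singleton.mpr (pow_dvd_pow _ (by omega)) h5
  have hprop : ∀ n : ℕ, truncatedMap p (n + 1) (Ideal.Quotient.mk (Ideal.span {(p : R)}))
      ((⟨xc, htrans⟩ : Warrow p R).1 n) = y.1 n := by
    intro n
    refine TruncatedWittVector.ext fun i => ?_
    show (truncatedMap p (n+1) (Ideal.Quotient.mk (Ideal.span {(p : R)})) (xc n)).coeff i
      = (y.1 n).coeff i
    rw [truncatedMap, TruncatedWittVector.coeff_mk, hxc]
    have h1 := hLs n i i.isLt 1
    rw [pow_one] at h1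
    have e : L n i i.isLt - (frob^[1] (Z (n+1))).coeff i
        = -((frob^[1] (Z (n+1))).coeff i - L n i i.isLt) := by ring
    have h2 : Ideal.Quotient.mk (Ideal.span {(p : R)}) (L n i i.isLt)
        = Ideal.Quotient.mk (Ideal.span {(p : R)}) ((frob^[1] (Z (n+1))).coeff i) := by
      refine Ideal.Quotient.eq.mpr ?_
      rw [e]
      exact neg_mem h1
    rw [h2, Function.iterate_one]
    calc Ideal.Quotient.mk (Ideal.span {(p : R)}) ((frob (Z (n+1))).coeff i)
        = (frob (Zy (n+1))).coeff i := hmkF _ _ (hZ (n+1)) i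
      _ = (Zy n).coeff i := factT y n i i.isLt
      _ = (y.1 n).coeff i := TruncatedWittVector.coeff_out (y.1 n) i
  refine ⟨⟨xc, htrans⟩, hprop, ?_⟩
  intro x' hx'
  refine warrow_uniq x' ⟨xc, htrans⟩ fun n i => ?_
  have e1 := congrArg (fun t => TruncatedWittVector.coeff i t) (hx' n)
  have e2 := congrArg (fun t => TruncatedWittVector.coeff i t) (hprop n)
  simp only [truncatedMap, TruncatedWittVector.coeff_mk] at e1 e2
  exact e1.trans e2.symm
end

section
/- Let R be a ring of characteristic p and let R' be the inverse limit of R under the p-power Frobenius endomorphism. Then (a) the natural projection W⃖(R') → W⃖(R) is an isomorphism, and (b) the Frobenius F is bijective on W⃖(R'), giving natural isomorphisms W(R') ≅ lim←_F W(R') ≅ W⃖(R'). -/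
set_option linter.unusedSectionVars false

open WittVector

/-- `lim←_F W(R)`: the inverse limit of copies of `W(R)` along Frobenius. -/
def WittFrobLim (p : ℕ) [Fact p.Prime] (R : Type*) [CommRing R] : Type _ :=
  { w : ℕ → WittVector p R // ∀ n : ℕ, WittVector.frobenius (w (n + 1)) = w n }

section Aux

variable {p : ℕ} [Fact p.Prime] {S : Type*} [CommRing S]

lemma truncatedMap_coeff {R : Type*} [CommRing R] {n : ℕ} (f : R →+* S)
    (x : TruncatedWittVector p n R) (i : Fin n) :
    (truncatedMap p n f x).coeff i = f (x.coeff i) :=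
  TruncatedWittVector.coeff_mk _ _

variable [CharP S p]

lemma truncatedFrobenius_coeff (n : ℕ) (x : TruncatedWittVector p (n + 2) S) (i : Fin (n + 1)) :
    (truncatedFrobenius p S n x).coeff i = frobenius S p (x.coeff i.castSucc) := by
  show (WittVector.truncate (n + 1) (WittVector.frobenius x.out)).coeff i = _
  rw [WittVector.coeff_truncate, WittVector.coeff_frobenius_charP, frobenius_def]
  congr 1
  simpa using TruncatedWittVector.coeff_out x i.castSucc

/-- Total coefficient function of an element of `Warrow`. -/
def gcoeff (y : Warrow p S) (m i : ℕ) : S :=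
  if h : i < m + 1 then (y.1 m).coeff ⟨i, h⟩ else 0

lemma gcoeff_eq (y : Warrow p S) {m i : ℕ} (h : i < m + 1) :
    gcoeff y m i = (y.1 m).coeff ⟨i, h⟩ := dif_pos h

lemma warrow_succ (y : Warrow p S) (m i : ℕ) (h : i < m + 1) :
    frobenius S p ((y.1 (m + 1)).coeff ⟨i, by omega⟩) = (y.1 m).coeff ⟨i, h⟩ := by
  conv_rhs => rw [← y.2 m]
  rw [truncatedFrobenius_coeff]
  rfl

lemma gcoeff_succ (y : Warrow p S) (m i : ℕ) (h : i < m + 1) :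
    gcoeff y (m + 1) i ^ p = gcoeff y m i := by
  rw [gcoeff_eq y (show i < m + 1 + 1 by omega), gcoeff_eq y h, ← warrow_succ y m i h,
    frobenius_def]

lemma warrow_iter (y : Warrow p S) (n k i : ℕ) (h : i < n + 1) :
    (frobenius S p)^[k] ((y.1 (n + k)).coeff ⟨i, by omega⟩) = (y.1 n).coeff ⟨i, h⟩ := by
  induction k with
  | zero => rfl
  | succ k ih =>
    rw [Function.iterate_succ_apply]
    have h2 : frobenius S p ((y.1 (n + (k + 1))).coeff ⟨i, by omega⟩)
        = (y.1 (n + k)).coeff ⟨i, by omega⟩ := warrow_succ y (n + k) i (by omega)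
    rw [h2]
    exact ih

lemma wflim_iter (w : WittFrobLim p S) (n k i : ℕ) :
    (w.1 n).coeff i = (frobenius S p)^[k] ((w.1 (n + k)).coeff i) := by
  induction k with
  | zero => rfl
  | succ k ih =>
    rw [ih, Function.iterate_succ_apply]
    congr 1
    have h2 : WittVector.frobenius (w.1 (n + (k + 1))) = w.1 (n + k) := w.2 (n + k)
    rw [← h2, WittVector.coeff_frobenius_charP, frobenius_def]

/-- The canonical lift of the coefficients of an element of `Warrow p S` to the perfection. -/
def perfLift {R : Type*} [CommRing R] [CharP R p] (y : Warrow p R) (n i : ℕ)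
    (h : i < n + 1) : Perfection R p :=
  ⟨fun k => gcoeff y (n + k) i, fun k => gcoeff_succ y (n + k) i (by omega)⟩

lemma coeff_perfLift {R : Type*} [CommRing R] [CharP R p] (y : Warrow p R) (n i : ℕ)
    (h : i < n + 1) (k : ℕ) :
    Perfection.coeff R p k (perfLift y n i h) = gcoeff y (n + k) i := rfl

end Aux

/-- Let `R` have characteristic `p` and let `R'` be the inverse limit of `R` under the
`p`-power Frobenius (the perfection). Then (a) the natural projection `W⃖(R') → W⃖(R)`
is an isomorphism; and (b) Frobenius is bijective on `W⃖(R')`, giving natural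
isomorphisms `W(R') ≅ lim←_F W(R') ≅ W⃖(R')`. -/
theorem stmt12 (p : ℕ) [Fact p.Prime] (R : Type*) [CommRing R] [CharP R p] :
    -- (a) the projection `R' → R` induces a bijection `W⃖(R') → W⃖(R)`
    (∀ y : Warrow p R,
      ∃! x : Warrow p (Perfection R p),
        ∀ n : ℕ, truncatedMap p (n + 1) (Perfection.coeff R p 0) (x.1 n) = y.1 n) ∧
    -- (b) Frobenius is bijective on `W⃖(R')`
    (∀ y : Warrow p (Perfection R p),
      ∃! x : Warrow p (Perfection R p),
        ∀ n : ℕ, truncatedMap p (n + 1) (frobenius (Perfection R p) p) (x.1 n) = y.1 n) ∧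
    -- `W(R') ≅ lim←_F W(R')` via evaluation at the zeroth term
    (∀ z : WittVector p (Perfection R p),
      ∃! w : WittFrobLim p (Perfection R p), w.1 0 = z) ∧
    -- `lim←_F W(R') ≅ W⃖(R')` via truncation
    (∀ y : Warrow p (Perfection R p),
      ∃! w : WittFrobLim p (Perfection R p),
        ∀ n : ℕ, WittVector.truncate (n + 1) (w.1 n) = y.1 n) := by
  haveI hCharP : CharP (Perfection R p) p := inferInstance
  haveI hPerf : PerfectRing (Perfection R p) p := inferInstance
  set R' := Perfection R p with hR'
  refine ⟨?_, ?_, ?_, ?_⟩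
  · -- (a)
    intro y
    have key : ∀ x' : Warrow p R',
        (∀ n, truncatedMap p (n + 1) (Perfection.coeff R p 0) (x'.1 n) = y.1 n) →
        ∀ n (i : Fin (n + 1)) k,
          Perfection.coeff R p k ((x'.1 n).coeff i) = gcoeff y (n + k) ↑i := by
      intro x' hx' n i k
      have h1 : (x'.1 n).coeff i
          = (frobenius R' p)^[k] ((x'.1 (n + k)).coeff ⟨↑i, by omega⟩) :=
        (warrow_iter x' n k ↑i i.2).symm
      rw [h1]
      have h2 := Perfection.coeff_iterate_frobenius ((x'.1 (n + k)).coeff ⟨↑i, by omega⟩) 0 k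
      rw [Nat.zero_add] at h2
      rw [h2]
      have h3 := congrArg (fun z => TruncatedWittVector.coeff
        (⟨↑i, by omega⟩ : Fin (n + k + 1)) z) (hx' (n + k))
      simp only [truncatedMap_coeff] at h3
      exact h3.trans (gcoeff_eq y (show (↑i : ℕ) < n + k + 1 by omega)).symm
    refine ⟨⟨fun n => TruncatedWittVector.mk p fun i => perfLift y n ↑i i.2, ?_⟩, ?_, ?_⟩
    · intro n
      apply TruncatedWittVector.ext; intro i
      rw [truncatedFrobenius_coeff, TruncatedWittVector.coeff_mk, TruncatedWittVector.coeff_mk]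
      apply Perfection.ext; intro k
      rw [frobenius_def, map_pow]
      show gcoeff y (n + 1 + k) ↑i ^ p = gcoeff y (n + k) ↑i
      rw [Nat.add_right_comm n 1 k]
      exact gcoeff_succ y (n + k) ↑i (by omega)
    · intro n
      apply TruncatedWittVector.ext; intro i
      rw [truncatedMap_coeff, TruncatedWittVector.coeff_mk]
      show gcoeff y (n + 0) ↑i = _
      exact gcoeff_eq y i.2
    · intro x' hx'
      apply Subtype.ext; funext n
      apply TruncatedWittVector.ext; intro i
      apply Perfection.ext; intro k
      rw [key x' hx' n i k, TruncatedWittVector.coeff_mk]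
      rfl
  · -- (b)
    intro y
    refine ⟨⟨fun n => TruncatedWittVector.mk p
        fun i => (frobeniusEquiv R' p).symm ((y.1 n).coeff i), ?_⟩, ?_, ?_⟩
    · intro n
      apply TruncatedWittVector.ext; intro i
      rw [truncatedFrobenius_coeff, TruncatedWittVector.coeff_mk, TruncatedWittVector.coeff_mk]
      have hy := congrArg (fun z => TruncatedWittVector.coeff i z) (y.2 n)
      simp only [truncatedFrobenius_coeff] at hy
      rw [frobenius_apply_frobeniusEquiv_symm, ← hy, frobeniusEquiv_symm_apply_frobenius]
    · intro n
      apply TruncatedWittVector.ext; intro i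
      rw [truncatedMap_coeff, TruncatedWittVector.coeff_mk,
        frobenius_apply_frobeniusEquiv_symm]
    · intro x' hx'
      apply Subtype.ext; funext n
      apply TruncatedWittVector.ext; intro i
      apply injective_frobenius R' p
      rw [TruncatedWittVector.coeff_mk, frobenius_apply_frobeniusEquiv_symm]
      have h3 := congrArg (fun z => TruncatedWittVector.coeff i z) (hx' n)
      simp only [truncatedMap_coeff] at h3
      exact h3
  · -- (c)
    intro z
    have hfr : ∀ a : WittVector p R',
        WittVector.frobenius ((WittVector.frobeniusEquiv p R').symm a) = a := fun a => by
      have h := (WittVector.frobeniusEquiv p R').apply_symm_apply a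
      rwa [WittVector.frobeniusEquiv_apply] at h
    have hWcompat : ∀ n, WittVector.frobenius ((WittVector.frobeniusEquiv p R').symm^[n + 1] z)
        = (WittVector.frobeniusEquiv p R').symm^[n] z := fun n => by
      rw [Function.iterate_succ_apply', hfr]
    refine ⟨⟨fun n => (WittVector.frobeniusEquiv p R').symm^[n] z, hWcompat⟩, rfl, ?_⟩
    intro w hw
    apply Subtype.ext; funext n
    show w.1 n = (WittVector.frobeniusEquiv p R').symm^[n] z
    induction n with
    | zero => exact hw
    | succ n ih =>
      apply (WittVector.frobenius_bijective p R').injective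
      rw [w.2 n, ih, hWcompat n]
  · -- (d)
    intro y
    have key : ∀ w : WittFrobLim p R',
        (∀ n, WittVector.truncate (n + 1) (w.1 n) = y.1 n) →
        ∀ n i : ℕ, (w.1 n).coeff i = (frobenius R' p)^[i] (gcoeff y (n + i) i) := by
      intro w hw n i
      rw [wflim_iter w n i i]
      congr 1
      have h3 := congrArg
        (fun z => TruncatedWittVector.coeff (⟨i, by omega⟩ : Fin (n + i + 1)) z) (hw (n + i))
      simp only [WittVector.coeff_truncate] at h3
      exact h3.trans (gcoeff_eq y (show i < n + i + 1 by omega)).symm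
    set W : ℕ → WittVector p R' :=
      fun n => WittVector.mk p fun i => (frobenius R' p)^[i - n] (gcoeff y (max n i) i) with hWdef
    have hWcoeff : ∀ n i, (W n).coeff i = (frobenius R' p)^[i - n] (gcoeff y (max n i) i) :=
      fun n i => congrFun (WittVector.coeff_mk p _) i
    have hWcompat : ∀ n, WittVector.frobenius (W (n + 1)) = W n := by
      intro n
      apply WittVector.ext; intro i
      rw [WittVector.coeff_frobenius_charP, hWcoeff, hWcoeff]
      rcases le_or_gt i n with h | h
      · rw [Nat.sub_eq_zero_of_le (by omega), Nat.sub_eq_zero_of_le h,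
          max_eq_left (by omega), max_eq_left h]
        exact gcoeff_succ y n i (by omega)
      · rw [max_eq_right (by omega : n + 1 ≤ i), max_eq_right (by omega : n ≤ i),
          ← frobenius_def,
          ← Function.iterate_succ_apply' (frobenius R' p) (i - (n + 1)) (gcoeff y i i)]
        congr 1
        omega
    have hWtrunc : ∀ n, WittVector.truncate (n + 1) (W n) = y.1 n := by
      intro n
      apply TruncatedWittVector.ext; intro i
      rw [WittVector.coeff_truncate, hWcoeff,
        Nat.sub_eq_zero_of_le (by omega : (↑i : ℕ) ≤ n), max_eq_left (by omega : (↑i : ℕ) ≤ n)]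
      rw [gcoeff_eq y (show (↑i : ℕ) < n + 1 from i.2)]
      rfl
    refine ⟨⟨W, hWcompat⟩, hWtrunc, ?_⟩
    intro w hw
    apply Subtype.ext; funext n
    apply WittVector.ext; intro i
    rw [key w hw n i, key ⟨W, hWcompat⟩ hWtrunc n i]
end
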